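/- Let u₀ : ℝ → ℝ be measurable and locally integrable with u₀(x) ≥ u_m for all x, let c < 0, Δx > 0, Δt > 0, λ = Δt/Δx with |c|·λ ≤ 1, and fix x₊ ∈ ℝ with x₋ = x₊ − Δx. Define ū_j = (1/Δx)∫_{x₋}^{x₊} u₀(x) dx and f̌₊ = (c/Δt)∫₀^{Δt} u₀(x₊ − c t) dt. Then ū_j − λ·(f̌₊ − c·ū_j) ≥ u_m. (This is the minimum-value analogue of Theorem 3.3 for the linear flux f(u) = c u with c < 0.) -/

import Mathlib

open MeasureTheory intervalIntegral

theorem godunov_limited_update_min_neg_speed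
    (u₀ : ℝ → ℝ) (hmeas : Measurable u₀) (hu : MeasureTheory.LocallyIntegrable u₀)
    (u_m : ℝ) (hbound : ∀ x, u_m ≤ u₀ x)
    (c Δx Δt lam xp xm : ℝ) (hc : c < 0) (hΔx : 0 < Δx) (hΔt : 0 < Δt)
    (hlam : lam = Δt / Δx) (hcfl : |c| * lam ≤ 1) (hx : xm = xp - Δx)
    (ubar : ℝ)
    (hubar : ubar = (1 / Δx) * ∫ x in xm..xp, u₀ x)
    (fp : ℝ)
    (hfp : fp = (c / Δt) * ∫ t in (0:ℝ)..Δt, u₀ (xp - c * t)) :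
    u_m ≤ ubar - lam * (fp - c * ubar) := by
  have hint : ∀ a b : ℝ, IntervalIntegrable u₀ volume a b := fun a b =>
    ⟨(hu.integrableOn_isCompact isCompact_Icc).mono_set Set.Ioc_subset_Icc_self,
     (hu.integrableOn_isCompact isCompact_Icc).mono_set Set.Ioc_subset_Icc_self⟩
  have hcne : (-c) ≠ 0 := by intro h; nlinarith
  set I1 := ∫ x in xm..xp, u₀ x with hI1
  set I2 := ∫ x in xp..(xp - c * Δt), u₀ x with hI2
  have hlampos : 0 < lam := by rw [hlam]; positivity
  have hxm : xm ≤ xp := by rw [hx]; linarith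
  have hxp2 : xp ≤ xp - c * Δt := by nlinarith
  have h1 : u_m * Δx ≤ I1 := by
    have h := intervalIntegral.integral_mono_on hxm (_root_.intervalIntegrable_const (c := u_m))
      (hint xm xp) (fun x _ => hbound x)
    rw [intervalIntegral.integral_const, smul_eq_mul] at h
    have hd : xp - xm = Δx := by rw [hx]; ring
    rw [hI1]
    have := h
    rw [hd, mul_comm] at this
    exact this
  have h2 : u_m * (-c * Δt) ≤ I2 := by
    have h := intervalIntegral.integral_mono_on hxp2 (_root_.intervalIntegrable_const (c := u_m))
      (hint xp (xp - c * Δt)) (fun x _ => hbound x)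
    rw [intervalIntegral.integral_const, smul_eq_mul] at h
    rw [hI2]
    have he : (xp - c * Δt - xp) * u_m = u_m * (-c * Δt) := by ring
    rw [he] at h
    exact h
  have harg : ∀ t : ℝ, xp - c * t = (-c) * t + xp := fun t => by ring
  have hcv : ∫ t in (0:ℝ)..Δt, u₀ (xp - c * t)
      = (-c)⁻¹ * ∫ x in ((-c) * 0 + xp)..((-c) * Δt + xp), u₀ x := by
    simp only [harg]
    rw [intervalIntegral.integral_comp_mul_add u₀ hcne xp, smul_eq_mul]
  have hb1 : (-c) * 0 + xp = xp := by ring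
  have hb2 : (-c) * Δt + xp = xp - c * Δt := by ring
  rw [hb1, hb2] at hcv
  have hub : ubar * Δx = I1 := by rw [hubar]; field_simp
  have hc0 : c ≠ 0 := ne_of_lt hc
  have key2 : ∀ I : ℝ, (c / Δt) * ((-c)⁻¹ * I) * Δt = -I := by
    intro I
    field_simp
  have hfpΔt : fp * Δt = -I2 := by
    rw [hfp, hcv]; exact key2 I2
  have hlx : lam * Δx = Δt := by rw [hlam]; field_simp
  have hlamc : 0 ≤ 1 + lam * c := by
    have habs : |c| = -c := abs_of_neg hc
    nlinarith [hcfl]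
  have e1 : (ubar - lam * (fp - c * ubar)) * Δx = I1 + I2 + lam * c * I1 := by
    calc (ubar - lam * (fp - c * ubar)) * Δx
        = (ubar * Δx) - (lam * Δx) * fp + lam * c * (ubar * Δx) := by ring
      _ = I1 - Δt * fp + lam * c * I1 := by rw [hub, hlx]
      _ = I1 + I2 + lam * c * I1 := by rw [mul_comm Δt fp, hfpΔt]; ring
  have key : u_m * Δx ≤ (ubar - lam * (fp - c * ubar)) * Δx := by
    rw [e1]
    have h2' : u_m * (-c * (lam * Δx)) ≤ I2 := by rw [hlx]; exact h2
    nlinarith [mul_le_mul_of_nonneg_left h1 hlamc, h2']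
  exact (mul_le_mul_iff_of_pos_right hΔx).mp key
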